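/- Let G be a group acting linearly on a finite-dimensional real vector space V, and suppose K ⊆ V is a G-invariant, centrally symmetric, compact convex set of maximal dimension among all such sets. If dim(span K) = dim V, then V admits a G-invariant inner product. -/

import Mathlib

/-!
STATEMENT 5: Let `G` be a group acting linearly on a finite-dimensional real
vector space `V`, and let `K ⊆ V` be a `G`-invariant, centrally symmetric,
compact convex set of maximal dimension among all such sets.  If
`dim (span K) = dim V` (i.e. `span ℝ K = ⊤`), then `V` admits a `G`-invariant
inner product (a symmetric positive definite invariant bilinear form).
-/

open MeasureTheory Topology

-- auxiliary: the representation as a monoid hom into units of continuous linear maps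
noncomputable def piHom {G V : Type*} [Group G] [NormedAddCommGroup V] [NormedSpace ℝ V]
    [FiniteDimensional ℝ V] (ρ : Representation ℝ G V) : G →* (V →L[ℝ] V)ˣ where
  toFun g :=
    { val := LinearMap.toContinuousLinearMap (ρ g)
      inv := LinearMap.toContinuousLinearMap (ρ g⁻¹)
      val_inv := by
        ext v
        simp [ContinuousLinearMap.mul_apply, ← Module.End.mul_apply, ← map_mul]
      inv_val := by
        ext v
        simp [ContinuousLinearMap.mul_apply, ← Module.End.mul_apply, ← map_mul] }
  map_one' := by
    apply Units.ext
    ext v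
    simp
  map_mul' g h := by
    apply Units.ext
    ext v
    simp [ContinuousLinearMap.mul_apply, ← Module.End.mul_apply, ← map_mul]

lemma piHom_val_apply {G V : Type*} [Group G] [NormedAddCommGroup V] [NormedSpace ℝ V]
    [FiniteDimensional ℝ V] (ρ : Representation ℝ G V) (g : G) (v : V) :
    ((piHom ρ g : (V →L[ℝ] V)ˣ) : V →L[ℝ] V) v = ρ g v := by
  simp [piHom]


theorem invariant_inner_product_of_full_dimensional_invariant_body
    {G : Type*} [Group G]
    {V : Type*} [NormedAddCommGroup V] [NormedSpace ℝ V] [FiniteDimensional ℝ V]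
    (ρ : Representation ℝ G V)
    (K : Set V)
    (hKconv : Convex ℝ K) (hKcpt : IsCompact K) (hKsymm : K = -K)
    (hKinv : ∀ h : G, (fun v => ρ h v) '' K = K)
    (hKmax : ∀ K' : Set V, Convex ℝ K' → IsCompact K' → K' = -K' →
      (∀ h : G, (fun v => ρ h v) '' K' = K') →
      Module.finrank ℝ (Submodule.span ℝ K') ≤ Module.finrank ℝ (Submodule.span ℝ K))
    (hKfull : Submodule.span ℝ K = ⊤) :
    ∃ B : V →ₗ[ℝ] V →ₗ[ℝ] ℝ,
      (∀ v w : V, B v w = B w v) ∧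
      (∀ v : V, v ≠ 0 → 0 < B v v) ∧
      (∀ (h : G) (v w : V), B (ρ h v) (ρ h w) = B v w) := by
  classical
  rcases subsingleton_or_nontrivial V with hV | hV
  · refine ⟨0, by simp, ?_, by simp⟩
    intro v hv
    exact absurd (Subsingleton.elim v 0) hv
  -- step 1: 0 is an interior point of K
  have hKne : K.Nonempty := by
    by_contra h
    rw [Set.not_nonempty_iff_eq_empty] at h
    rw [h, Submodule.span_empty] at hKfull
    exact bot_ne_top (α := Submodule ℝ V) hKfull
  have hmemneg : ∀ x ∈ K, -x ∈ K := by
    intro x hx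
    rw [hKsymm]
    simpa using hx
  have hmid : ∀ (s : Set V), Convex ℝ s → (∀ x ∈ s, -x ∈ s) → s.Nonempty → (0:V) ∈ s := by
    intro s hconv hneg ⟨x, hx⟩
    have := hconv hx (hneg x hx) (by norm_num : (0:ℝ) ≤ 1/2) (by norm_num : (0:ℝ) ≤ 1/2)
      (by norm_num)
    simpa using this
  have h0K : (0:V) ∈ K := hmid K hKconv hmemneg hKne
  have haff : affineSpan ℝ K = ⊤ := by
    rw [AffineSubspace.affineSpan_eq_top_iff_vectorSpan_eq_top_of_nonempty ℝ V V hKne]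
    rw [eq_top_iff, ← hKfull]
    rw [Submodule.span_le]
    intro x hx
    have : x -ᵥ (0:V) ∈ vectorSpan ℝ K := vsub_mem_vectorSpan ℝ hx h0K
    simpa using this
  have hintne : (interior K).Nonempty :=
    hKconv.interior_nonempty_iff_affineSpan_eq_top.mpr haff
  have h0int : (0:V) ∈ interior K := by
    refine hmid (interior K) hKconv.interior ?_ hintne
    intro x hx
    have hsub : -interior K ⊆ K := by
      conv_rhs => rw [hKsymm]
      exact Set.neg_subset_neg.mpr interior_subset
    have hmax := interior_maximal hsub isOpen_interior.neg
    apply hmax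
    simpa using hx
  obtain ⟨ε, hε, hball⟩ := Metric.mem_nhds_iff.mp (mem_interior_iff_mem_nhds.mp h0int)
  obtain ⟨R, hR⟩ := hKcpt.isBounded.subset_closedBall (0:V)
  have hR0 : 0 ≤ R := by simpa using hR h0K
  set r : ℝ := ε/2 with hr
  have hr0 : 0 < r := by positivity
  -- operator norm bound
  have hbound : ∀ (g : G) (v : V), ‖ρ g v‖ ≤ (R / r) * ‖v‖ := by
    intro g v
    rcases eq_or_ne v 0 with rfl | hv
    · simp
    have hvpos : 0 < ‖v‖ := norm_pos_iff.mpr hv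
    set u : V := (r / ‖v‖) • v with hu
    have hun : ‖u‖ = r := by
      rw [hu, norm_smul, Real.norm_eq_abs, abs_of_pos (by positivity)]
      field_simp
    have huK : u ∈ K := hball (by simp [Metric.mem_ball, hun]; linarith)
    have hgu : ρ g u ∈ K := by
      rw [← hKinv g]
      exact ⟨u, huK, rfl⟩
    have : ‖ρ g u‖ ≤ R := by simpa using hR hgu
    rw [hu, _root_.map_smul, norm_smul, Real.norm_eq_abs, abs_of_pos (by positivity)] at this
    rw [div_mul_eq_mul_div, div_le_iff₀ hvpos] at this
    rw [div_mul_eq_mul_div, le_div_iff₀ hr0]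
    linarith
  -- step 2: compact closure of the image in the unit group
  set C : ℝ := R / r with hC
  have hC0 : 0 ≤ C := by positivity
  let π : G →* (V →L[ℝ] V)ˣ := piHom ρ
  have hπval : ∀ g : G, ‖((π g : (V →L[ℝ] V)ˣ) : V →L[ℝ] V)‖ ≤ C := by
    intro g
    apply ContinuousLinearMap.opNorm_le_bound _ hC0
    intro v
    simpa [π, piHom_val_apply] using hbound g v
  have hπinv : ∀ g : G, ‖(((π g)⁻¹ : (V →L[ℝ] V)ˣ) : V →L[ℝ] V)‖ ≤ C := by
    intro g
    rw [← map_inv]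
    exact hπval g⁻¹
  let e := Units.embedProduct (V →L[ℝ] V)
  haveI : FiniteDimensional ℝ (V →L[ℝ] V)ᵐᵒᵖ :=
    Module.Finite.equiv (MulOpposite.opLinearEquiv ℝ (M := V →L[ℝ] V))
  set T : Set ((V →L[ℝ] V) × (V →L[ℝ] V)ᵐᵒᵖ) :=
    (Metric.closedBall 0 C ×ˢ Metric.closedBall 0 C) ∩
      ({p | p.1 * p.2.unop = 1} ∩ {p | p.2.unop * p.1 = 1}) with hTdef
  have hTclosed : IsClosed ({p : (V →L[ℝ] V) × (V →L[ℝ] V)ᵐᵒᵖ | p.1 * p.2.unop = 1} ∩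
      {p | p.2.unop * p.1 = 1}) :=
    (isClosed_eq (continuous_fst.mul (MulOpposite.continuous_unop.comp continuous_snd))
        continuous_const).inter
      (isClosed_eq ((MulOpposite.continuous_unop.comp continuous_snd).mul continuous_fst)
        continuous_const)
  have hTcompact : IsCompact T :=
    ((isCompact_closedBall _ _).prod (isCompact_closedBall _ _)).inter_right hTclosed
  have hrange : T ⊆ Set.range e := by
    rintro ⟨a, b⟩ ⟨-, hab, hba⟩
    exact ⟨⟨a, b.unop, hab, hba⟩, by simp [e, Units.embedProduct]⟩
  have himg : e '' (Set.range π) ⊆ T := by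
    rintro - ⟨-, ⟨g, rfl⟩, rfl⟩
    refine ⟨⟨?_, ?_⟩, ?_, ?_⟩
    · simpa [e, Units.embedProduct, mem_closedBall_zero_iff] using hπval g
    · simpa [e, Units.embedProduct, mem_closedBall_zero_iff, MulOpposite.norm_op] using hπinv g
    · simp [e, Units.embedProduct]
    · simp [e, Units.embedProduct]
  have hclcomp : IsCompact (closure (Set.range (π : G → (V →L[ℝ] V)ˣ))) := by
    have h1 : closure (e '' Set.range π) ⊆ T := closure_minimal himg hTcompact.isClosed
    have h2 : IsCompact (closure (e '' Set.range π)) :=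
      hTcompact.of_isClosed_subset isClosed_closure h1
    rw [Units.isEmbedding_embedProduct.closure_eq_preimage_closure_image,
      Units.isEmbedding_embedProduct.isCompact_iff,
      Set.image_preimage_eq_of_subset (h1.trans hrange)]
    exact h2
  let H : Subgroup (V →L[ℝ] V)ˣ := π.range.topologicalClosure
  have hHset : (H : Set (V →L[ℝ] V)ˣ) = closure (Set.range (π : G → (V →L[ℝ] V)ˣ)) := by
    simp [H, Subgroup.topologicalClosure_coe, MonoidHom.coe_range]
  haveI : CompactSpace H := isCompact_iff_compactSpace.mp (hHset ▸ hclcomp)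
  -- step 3: Haar measure on H
  letI : MeasurableSpace H := borel H
  haveI : BorelSpace H := ⟨rfl⟩
  let μ : MeasureTheory.Measure H := MeasureTheory.Measure.haar
  haveI : IsFiniteMeasure μ := CompactSpace.isFiniteMeasure
  have hμuniv : 0 < μ Set.univ := by
    exact isOpen_univ.measure_pos μ ⟨⟨1, H.one_mem⟩, trivial⟩
  -- step 4: base positive definite form
  let n := Module.finrank ℝ V
  let L : V ≃ₗ[ℝ] (Fin n → ℝ) := (Module.finBasis ℝ V).equivFun
  let B0 : V →ₗ[ℝ] V →ₗ[ℝ] ℝ := LinearMap.mk₂ ℝ (fun v w => ∑ i, L v i * L w i)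
    (fun a b w => by simp [map_add, add_mul, Finset.sum_add_distrib])
    (fun c a w => by simp [_root_.map_smul, smul_eq_mul, mul_assoc, Finset.mul_sum])
    (fun a b c => by simp [map_add, mul_add, Finset.sum_add_distrib])
    (fun c a w => by simp [_root_.map_smul, smul_eq_mul, Finset.mul_sum, mul_left_comm])
  have hB0apply : ∀ v w : V, B0 v w = ∑ i, L v i * L w i := fun v w => rfl
  have hB0symm : ∀ v w : V, B0 v w = B0 w v := by
    intro v w
    simp only [hB0apply]
    exact Finset.sum_congr rfl fun i _ => mul_comm _ _
  have hB0pos : ∀ v : V, v ≠ 0 → 0 < B0 v v := by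
    intro v hv
    rw [hB0apply]
    have hLv : L v ≠ 0 := by simpa using hv
    obtain ⟨i, hi⟩ := Function.ne_iff.mp hLv
    exact Finset.sum_pos' (fun j _ => mul_self_nonneg _)
      ⟨i, Finset.mem_univ i, mul_self_pos.mpr (by simpa using hi)⟩
  -- step 5: the averaged form
  let F : H → (V →L[ℝ] V) := fun h => ↑((h : (V →L[ℝ] V)ˣ)⁻¹)
  have hFcont : Continuous F :=
    Units.continuous_val.comp (continuous_inv.comp continuous_subtype_val)
  have hLcont : Continuous L := LinearMap.continuous_of_finiteDimensional (L : V →ₗ[ℝ] (Fin n → ℝ))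
  have hcont : ∀ v w : V, Continuous fun h : H => B0 (F h v) (F h w) := by
    intro v w
    have hev : ∀ u : V, Continuous fun h : H => F h u := fun u =>
      (ContinuousLinearMap.apply ℝ V u).continuous.comp hFcont
    simp only [hB0apply]
    apply continuous_finset_sum
    intro i _
    exact ((continuous_apply i).comp (hLcont.comp (hev v))).mul
      ((continuous_apply i).comp (hLcont.comp (hev w)))
  have hint : ∀ v w : V, Integrable (fun h : H => B0 (F h v) (F h w)) μ := by
    intro v w
    rw [← integrableOn_univ]
    exact (hcont v w).continuousOn.integrableOn_compact' isCompact_univ MeasurableSet.univ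
  -- step 6: assemble
  refine ⟨LinearMap.mk₂ ℝ (fun v w => ∫ h, B0 (F h v) (F h w) ∂μ) ?_ ?_ ?_ ?_, ?_, ?_, ?_⟩
  · intro a b w
    simp only [map_add, LinearMap.add_apply]
    exact integral_add (hint a w) (hint b w)
  · intro c a w
    simp only [_root_.map_smul, LinearMap.smul_apply]
    exact integral_smul c _
  · intro a b c
    simp only [map_add, LinearMap.add_apply]
    exact integral_add (hint a b) (hint a c)
  · intro c a b
    simp only [_root_.map_smul, LinearMap.smul_apply]
    exact integral_smul c _
  · intro v w
    simp only [LinearMap.mk₂_apply]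
    exact integral_congr_ae (Filter.Eventually.of_forall fun h => by
      show B0 (F h v) (F h w) = B0 (F h w) (F h v)
      rw [hB0symm])
  · intro v hv
    simp only [LinearMap.mk₂_apply]
    have hpos : ∀ h : H, 0 < B0 (F h v) (F h v) := by
      intro h
      apply hB0pos
      intro hzero
      apply hv
      have hvv : ((h : (V →L[ℝ] V)ˣ) : V →L[ℝ] V) (F h v) = v := by
        show ((h : (V →L[ℝ] V)ˣ) : V →L[ℝ] V) ((((h : (V →L[ℝ] V)ˣ)⁻¹ :
          (V →L[ℝ] V)ˣ) : V →L[ℝ] V) v) = v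
        rw [← ContinuousLinearMap.mul_apply, Units.mul_inv, ContinuousLinearMap.one_apply]
      rw [hzero] at hvv
      simpa using hvv.symm
    have hsupp : Function.support (fun h : H => B0 (F h v) (F h v)) = Set.univ := by
      ext h
      simp [Function.mem_support, (hpos h).ne']
    rw [integral_pos_iff_support_of_nonneg (fun h => (hpos h).le) (hint v v), hsupp]
    exact hμuniv
  · intro g v w
    simp only [LinearMap.mk₂_apply]
    have hgH : π g ∈ H := Subgroup.le_topologicalClosure _ (MonoidHom.mem_range.mpr ⟨g, rfl⟩)
    set gH : H := ⟨π g, hgH⟩ with hgHdef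
    have hFg : ∀ (h : H) (x : V), F (gH⁻¹ * h) x = F h (ρ g x) := by
      intro h x
      show ((((gH⁻¹ * h : H) : (V →L[ℝ] V)ˣ)⁻¹ : (V →L[ℝ] V)ˣ) : V →L[ℝ] V) x = _
      have hcoe : ((gH⁻¹ * h : H) : (V →L[ℝ] V)ˣ) = (π g)⁻¹ * (h : (V →L[ℝ] V)ˣ) := rfl
      rw [hcoe, mul_inv_rev, inv_inv, Units.val_mul, ContinuousLinearMap.mul_apply]
      exact congrArg _ (piHom_val_apply ρ g x)
    calc (∫ h, B0 (F h (ρ g v)) (F h (ρ g w)) ∂μ)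
        = ∫ h, B0 (F (gH⁻¹ * h) v) (F (gH⁻¹ * h) w) ∂μ :=
          integral_congr_ae (Filter.Eventually.of_forall fun h => by
            show B0 (F h (ρ g v)) (F h (ρ g w)) = B0 (F (gH⁻¹ * h) v) (F (gH⁻¹ * h) w)
            rw [hFg, hFg])
      _ = ∫ h, B0 (F h v) (F h w) ∂μ :=
          integral_mul_left_eq_self (fun h : H => B0 (F h v) (F h w)) gH⁻¹
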